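/- In a Helly circular-arc model, every maximal clique of the intersection graph equals the set of arcs containing some point of the circle. -/

import Mathlib

/-- `S` is an arc of the circle `ℝ/ℤ`. -/
def IsArc (S : Set (AddCircle (1:ℝ))) : Prop :=
  ∃ s l : ℝ, 0 ≤ l ∧ l < 1 ∧
    S = {x | ∃ t : ℝ, 0 ≤ t ∧ t ≤ l ∧ x = (↑s : AddCircle (1:ℝ)) + ↑t}

/-- The intersection graph of a family of arcs: one vertex per arc, two
distinct vertices adjacent iff the arcs intersect. -/
def interGraph {ι : Type*} (A : ι → Set (AddCircle (1:ℝ))) : SimpleGraph ι where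
  Adj i j := i ≠ j ∧ (A i ∩ A j).Nonempty
  symm := by
    constructor
    intro i j h
    exact ⟨h.1.symm, by rw [Set.inter_comm]; exact h.2⟩
  loopless := by
    constructor
    intro i h
    exact h.1 rfl

/-- `S` is a maximal clique of `G`. -/
def IsMaxClique {V : Type*} (G : SimpleGraph V) (S : Set V) : Prop :=
  G.IsClique S ∧ ∀ T : Set V, G.IsClique T → S ⊆ T → T = S

/-- In a Helly circular-arc model, every maximal clique of the intersection
graph equals the set of arcs containing some point of the circle. -/
theorem maxClique_eq_arcs_through_point {ι : Type*} [Fintype ι]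
    (A : ι → Set (AddCircle (1:ℝ))) (harc : ∀ i, IsArc (A i))
    (hHelly : ∀ s : Set ι, (∀ i ∈ s, ∀ j ∈ s, (A i ∩ A j).Nonempty) →
      ∃ p, ∀ i ∈ s, p ∈ A i)
    (S : Set ι) (hS : IsMaxClique (interGraph A) S) :
    ∃ p : AddCircle (1:ℝ), S = {i | p ∈ A i} := by
  obtain ⟨hclique, hmax⟩ := hS
  have hne : ∀ i, (A i).Nonempty := by
    intro i
    obtain ⟨s, l, hl0, hl1, hSi⟩ := harc i
    refine ⟨(s : AddCircle (1:ℝ)), ?_⟩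
    rw [hSi]
    exact ⟨0, le_refl 0, hl0, by simp⟩
  have hpair : ∀ i ∈ S, ∀ j ∈ S, (A i ∩ A j).Nonempty := by
    intro i hi j hj
    by_cases h : i = j
    · subst h; simpa [Set.inter_self] using hne i
    · exact (hclique hi hj h).2
  obtain ⟨p, hp⟩ := hHelly S hpair
  refine ⟨p, ?_⟩
  have hcl : (interGraph A).IsClique {i | p ∈ A i} := by
    intro i hi j hj hij
    exact ⟨hij, ⟨p, hi, hj⟩⟩
  exact (hmax _ hcl (fun i hi => hp i hi)).symm
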